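/- For every ε > 0 and every p₀ ∈ (0, ε²/(1+ε²)], the measurement periods satisfy T^(2) = arccos(1 - 2(1 + 1/ε²)p₀)/√(1+ε²) ≥ T^(1) = arccos(1 - 2p₀)/ε. -/

import Mathlib

set_option maxHeartbeats 1000000

open Real

lemma arccos_anti {x y : ℝ} (h : x ≤ y) : Real.arccos y ≤ Real.arccos x := by
  unfold Real.arccos
  have := Real.monotone_arcsin h
  linarith

/-- `T⁽²⁾ ≥ T⁽¹⁾` for every `ε > 0` and `p₀ ∈ (0, ε²/(1+ε²)]`. -/
theorem period_two_ge_period_one (ε p₀ : ℝ) (hε : 0 < ε)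
    (hp₀ : p₀ ∈ Set.Ioc 0 (ε ^ 2 / (1 + ε ^ 2))) :
    Real.arccos (1 - 2 * (1 + 1 / ε ^ 2) * p₀) / Real.sqrt (1 + ε ^ 2) ≥
      Real.arccos (1 - 2 * p₀) / ε := by
  obtain ⟨hp0, hp1⟩ := hp₀
  have hε2 : (0:ℝ) < ε ^ 2 := by positivity
  have h1ε : (0:ℝ) < 1 + ε ^ 2 := by positivity
  set S := Real.sqrt (1 + ε ^ 2) with hSdef
  have hS0 : 0 < S := Real.sqrt_pos.mpr h1ε
  have hS2 : S ^ 2 = 1 + ε ^ 2 := Real.sq_sqrt h1ε.le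
  have hSε : ε ≤ S := by nlinarith
  have hp1' : p₀ * (1 + ε ^ 2) ≤ ε ^ 2 := by
    have := (le_div_iff₀ h1ε).mp hp1
    linarith [(le_div_iff₀ h1ε).mp hp1]
  have hp1'' : p₀ ≤ 1 := by nlinarith
  set a := Real.arccos (1 - 2 * p₀) with hadef
  have ha0 : 0 ≤ a := Real.arccos_nonneg _
  have haπ : a ≤ π := Real.arccos_le_pi _
  have hcos : Real.cos a = 1 - 2 * p₀ :=
    Real.cos_arccos (by linarith) (by linarith)
  have hsin : Real.sin (a / 2) ^ 2 = p₀ := by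
    have h := Real.sin_sq_eq_half_sub (a / 2)
    rw [show 2 * (a / 2) = a by ring, hcos] at h
    linarith
  have hsin0 : 0 ≤ Real.sin (a / 2) :=
    Real.sin_nonneg_of_nonneg_of_le_pi (by linarith) (by linarith [Real.pi_pos])
  -- sin (a/2) ≤ ε / S
  have hεS : Real.sin (a / 2) ≤ ε / S := by
    have h2 : (ε / S) ^ 2 = ε ^ 2 / (1 + ε ^ 2) := by rw [div_pow, hS2]
    have h3 : Real.sin (a / 2) ^ 2 ≤ (ε / S) ^ 2 := by rw [hsin, h2]; exact hp1
    have h4 : 0 ≤ ε / S := by positivity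
    nlinarith
  -- Jordan: a * S ≤ π * ε
  have hJ : a * S ≤ π * ε := by
    have hj := Real.mul_le_sin (x := a / 2) (by linarith) (by linarith)
    have hπ := Real.pi_pos
    have : 2 / π * (a / 2) ≤ ε / S := le_trans hj hεS
    rw [div_mul_eq_mul_div, div_le_div_iff₀ (by positivity) hS0] at this
    linarith
  set θ := a * S / (2 * ε) with hθdef
  have hθ0 : 0 ≤ θ := by positivity
  have hθπ : θ ≤ π / 2 := by
    rw [hθdef, div_le_iff₀ (by positivity)]
    linarith [hJ]
  -- concavity: (ε/S) * sin θ ≤ sin ((ε/S) * θ) = sin (a/2)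
  have hconc : (ε / S) * Real.sin θ ≤ Real.sin (a / 2) := by
    have hπ := Real.pi_pos
    have hmem0 : (0:ℝ) ∈ Set.Icc 0 π := ⟨le_rfl, hπ.le⟩
    have hmemθ : θ ∈ Set.Icc 0 π := ⟨hθ0, by linarith⟩
    have hl : 0 ≤ ε / S := by positivity
    have hl1 : ε / S ≤ 1 := (div_le_one hS0).mpr hSε
    have h := strictConcaveOn_sin_Icc.concaveOn.2 hmem0 hmemθ
      (by linarith : (0:ℝ) ≤ 1 - ε / S) hl (by ring)
    simp only [smul_eq_mul, Real.sin_zero, mul_zero, zero_add] at h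
    have heq : (ε / S) * θ = a / 2 := by
      rw [hθdef]; field_simp
    rw [heq] at h
    linarith [h]
  -- cos (2θ) ≥ 1 - 2(1+1/ε²) p₀
  have hsinθ0 : 0 ≤ Real.sin θ :=
    Real.sin_nonneg_of_nonneg_of_le_pi hθ0 (by linarith [Real.pi_pos])
  have hsinθ : Real.sin θ ^ 2 ≤ (1 + ε ^ 2) / ε ^ 2 * p₀ := by
    have h1 : Real.sin θ ≤ (S / ε) * Real.sin (a / 2) := by
      rw [div_mul_eq_mul_div, le_div_iff₀ hε]
      have := mul_le_mul_of_nonneg_left hconc hS0.le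
      calc Real.sin θ * ε = S * ((ε / S) * Real.sin θ) := by field_simp
        _ ≤ S * Real.sin (a / 2) := by nlinarith
    have h2 : Real.sin θ ^ 2 ≤ ((S / ε) * Real.sin (a / 2)) ^ 2 := by
      apply pow_le_pow_left₀ hsinθ0 h1
    calc Real.sin θ ^ 2 ≤ ((S / ε) * Real.sin (a / 2)) ^ 2 := h2
      _ = (1 + ε ^ 2) / ε ^ 2 * p₀ := by rw [mul_pow, div_pow, hS2, hsin]
  have hcos2θ : 1 - 2 * (1 + 1 / ε ^ 2) * p₀ ≤ Real.cos (2 * θ) := by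
    have h := Real.sin_sq_eq_half_sub θ
    have he : 2 * (1 + 1 / ε ^ 2) * p₀ = 2 * ((1 + ε ^ 2) / ε ^ 2 * p₀) := by
      field_simp; ring
    nlinarith [hsinθ]
  -- arccos ≥ 2θ
  have hkey : 2 * θ ≤ Real.arccos (1 - 2 * (1 + 1 / ε ^ 2) * p₀) := by
    have h := arccos_anti hcos2θ
    rwa [Real.arccos_cos (by linarith) (by linarith)] at h
  rw [ge_iff_le, div_le_div_iff₀ hε hS0]
  have h2θ : 2 * θ * ε = a * S := by
    rw [hθdef]; field_simp
  linarith [mul_le_mul_of_nonneg_right hkey hε.le]
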